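/- Let T : X → X be a minimal homeomorphism of a compact metric space, G a compact abelian metric group, and φ : X → G continuous. Define Γ_top = {χ ∈ Ĝ : χ∘φ is a topological T-coboundary, i.e., χ∘φ = h∘T / h for some continuous h : X → S¹}. Let g₀ ∈ G be such that every minimal component M of the skew product T_φ(x,g) = (Tx, φ(x)g) satisfies R_{g₀}(M) = M, where R_{g₀}(x,h) = (x, h·g₀⁻¹). Then χ(g₀) = 1 for all χ ∈ Γ_top. -/

import Mathlib

/-- If `g₀` stabilizes every minimal component of the skew product
`T_φ(x,g) = (Tx, φ(x)·g)` over a minimal homeomorphism `T` of a compact metric space,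
then `χ(g₀) = 1` for every character `χ` such that `χ∘φ` is a topological coboundary. -/
theorem stmt8 {X : Type*} [MetricSpace X] [CompactSpace X] [Nonempty X]
    (T : X ≃ₜ X) (hTmin : ∀ x : X, Dense (Set.range fun n : ℕ => T^[n] x))
    {G : Type*} [MetricSpace G] [CommGroup G] [IsTopologicalGroup G] [CompactSpace G]
    (φ : X → G) (hφ : Continuous φ) (g₀ : G)
    (hfix : ∀ M : Set (X × G),
      (M.Nonempty ∧ IsClosed M ∧
        (∀ p ∈ M, ((T p.1, φ p.1 * p.2) : X × G) ∈ M) ∧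
        (∀ M' ⊆ M, M'.Nonempty → IsClosed M' →
          (∀ p ∈ M', ((T p.1, φ p.1 * p.2) : X × G) ∈ M') → M' = M)) →
      (fun p : X × G => (p.1, p.2 * g₀⁻¹)) '' M = M)
    (χ : G →* ℂ) (hχcont : Continuous χ) (hχnorm : ∀ g : G, ‖χ g‖ = 1)
    (h : X → ℂ) (hhcont : Continuous h) (hhnorm : ∀ x, ‖h x‖ = 1)
    (hcob : ∀ x : X, χ (φ x) = h (T x) / h x) :
    χ g₀ = 1 := by
  classical
  -- the collection of nonempty closed invariant sets
  set S : Set (Set (X × G)) :=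
    {M | M.Nonempty ∧ IsClosed M ∧ ∀ p ∈ M, ((T p.1, φ p.1 * p.2) : X × G) ∈ M} with hS
  have huniv : Set.univ ∈ S := by
    refine ⟨Set.univ_nonempty, isClosed_univ, fun p _ => trivial⟩
  -- chain condition for Zorn
  have hchainCond : ∀ c ⊆ S, IsChain (· ⊆ ·) c → c.Nonempty →
      ∃ lb ∈ S, ∀ s ∈ c, lb ⊆ s := by
    intro c hcS hchain hcne
    refine ⟨⋂₀ c, ⟨?_, ?_, ?_⟩, fun s hs => Set.sInter_subset_of_mem hs⟩
    · -- nonempty intersection of chain of compact closed sets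
      have hcne' : Nonempty c := hcne.to_subtype
      have : (⋂ s : c, (s : Set (X × G))).Nonempty := by
        apply IsCompact.nonempty_iInter_of_directed_nonempty_isCompact_isClosed
        · rintro ⟨s, hs⟩ ⟨t, ht⟩
          rcases hchain.total hs ht with hst | hts
          · exact ⟨⟨s, hs⟩, subset_rfl, hst⟩
          · exact ⟨⟨t, ht⟩, hts, subset_rfl⟩
        · exact fun s => (hcS s.2).1
        · exact fun s => (hcS s.2).2.1.isCompact
        · exact fun s => (hcS s.2).2.1
      rwa [Set.sInter_eq_iInter]
    · exact isClosed_sInter fun s hs => (hcS hs).2.1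
    · intro p hp
      rw [Set.mem_sInter] at hp ⊢
      exact fun s hs => (hcS hs).2.2 p (hp s hs)
  -- Zorn: get a minimal element of S
  obtain ⟨M, -, hMS, hMmin⟩ := zorn_superset_nonempty S hchainCond Set.univ huniv
  obtain ⟨hMne, hMcl, hMinv⟩ := hMS
  have hMminProp : ∀ M' ⊆ M, M'.Nonempty → IsClosed M' →
      (∀ p ∈ M', ((T p.1, φ p.1 * p.2) : X × G) ∈ M') → M' = M := by
    intro M' hsub hne hcl hinv
    exact hsub.antisymm (hMmin (y := M') ⟨hne, hcl, hinv⟩ hsub)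
  have hfixM := hfix M ⟨hMne, hMcl, hMinv, hMminProp⟩
  -- the invariant function w(x,g) = χ g / h x
  set w : X × G → ℂ := fun p => χ p.2 / h p.1 with hw
  have hwc : Continuous w := (hχcont.comp continuous_snd).div
    (hhcont.comp continuous_fst) (fun p => by
      intro h0
      have := hhnorm p.1
      rw [h0] at this
      simp at this)
  have hwinv : ∀ p : X × G, w (T p.1, φ p.1 * p.2) = w p := by
    intro p
    have hh0 : h p.1 ≠ 0 := fun h0 => by have := hhnorm p.1; rw [h0] at this; simp at this
    have hhT0 : h (T p.1) ≠ 0 := fun h0 => by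
      have := hhnorm (T p.1); rw [h0] at this; simp at this
    simp only [hw, map_mul, hcob p.1]
    field_simp
  -- w is constant on M
  obtain ⟨p₀, hp₀⟩ := hMne
  have hconst : ∀ p ∈ M, w p = w p₀ := by
    have : M ∩ w ⁻¹' {w p₀} = M := by
      refine hMminProp _ Set.inter_subset_left ⟨p₀, hp₀, rfl⟩
        (hMcl.inter (IsClosed.preimage hwc isClosed_singleton)) ?_
      rintro p ⟨hpM, hpw⟩
      exact ⟨hMinv p hpM, by simpa [hwinv p] using hpw⟩
    intro p hp
    have hp' : p ∈ M ∩ w ⁻¹' {w p₀} := by rw [this]; exact hp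
    exact hp'.2
  -- apply the rotation fixing M
  have hq : (p₀.1, p₀.2 * g₀⁻¹) ∈ M := by
    rw [← hfixM]; exact ⟨p₀, hp₀, rfl⟩
  have h1 := hconst _ hq
  have h2 := hconst _ hp₀
  have hh0 : h p₀.1 ≠ 0 := fun h0 => by have := hhnorm p₀.1; rw [h0] at this; simp at this
  have hχ0 : (χ p₀.2 : ℂ) ≠ 0 := fun h0 => by
    have := hχnorm p₀.2; rw [h0] at this; simp at this
  simp only [hw, map_mul] at h1
  have h1' := congrArg (· * h p₀.1) h1
  simp only [div_mul_cancel₀ _ hh0] at h1'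
  have hinv1 : (χ g₀⁻¹ : ℂ) = 1 :=
    mul_left_cancel₀ hχ0 (by rw [h1', mul_one])
  have hfin : χ g₀ * χ g₀⁻¹ = 1 := by rw [← map_mul, mul_inv_cancel, map_one]
  rw [hinv1, mul_one] at hfin
  exact hfin
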